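/- For all X, Y ∈ V, one has ‖√(XᵀX) − √(YᵀY)‖ ≤ √2 · d_σ(X,Y), where ‖√(XᵀX) − √(YᵀY)‖ is the Frobenius norm of the tuple (√(X_1ᵀX_1) − √(Y_1ᵀY_1), …, √(X_LᵀX_L) − √(Y_LᵀY_L)). -/

import Mathlib

open scoped BigOperators
open Matrix

namespace GPR

variable {L : ℕ} {N R : Fin L → ℕ}

/-- The signal space: `L`-tuples of real `N ℓ × R ℓ` matrices. -/
abbrev V (N R : Fin L → ℕ) := ∀ ℓ : Fin L, Matrix (Fin (N ℓ)) (Fin (R ℓ)) ℝ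

/-- Frobenius norm of a tuple of matrices: `(Σ_ℓ Σ_{i,j} (X_ℓ)_{ij}²)^{1/2}`. -/
noncomputable def fnorm {m n : Fin L → ℕ} (X : ∀ ℓ : Fin L, Matrix (Fin (m ℓ)) (Fin (n ℓ)) ℝ) : ℝ :=
  Real.sqrt (∑ ℓ, ∑ i, ∑ j, (X ℓ i j) ^ 2)

/-- The group `H = ∏_ℓ O(N ℓ)`, as tuples of orthogonal matrices. -/
abbrev HGroup (N : Fin L → ℕ) := ∀ ℓ : Fin L, Matrix.orthogonalGroup (Fin (N ℓ)) ℝ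

/-- The action of `H` on `V`: `(Q · X)_ℓ = Q_ℓ X_ℓ`. -/
def act (Q : HGroup N) (X : V N R) : V N R :=
  fun ℓ => (Q ℓ : Matrix (Fin (N ℓ)) (Fin (N ℓ)) ℝ) * X ℓ

/-- `d_σ(X,Y) = min(‖X−Y‖, ‖X+Y‖)`. -/
noncomputable def dSigma (X Y : V N R) : ℝ := min (fnorm (X - Y)) (fnorm (X + Y))

/-- `d_H(X,Y) = min_{Q ∈ H} ‖X − Q·Y‖`. -/
noncomputable def dH (X Y : V N R) : ℝ := ⨅ Q : HGroup N, fnorm (X - act Q Y)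

/-- The positive semidefinite square root `√(XᵀX)` of the Gram matrix of a single matrix. -/
noncomputable def gramSqrt {n d : ℕ} (X : Matrix (Fin n) (Fin d) ℝ) : Matrix (Fin d) (Fin d) ℝ :=
  ((Matrix.posSemidef_conjTranspose_mul_self X).1.eigenvectorUnitary : Matrix (Fin d) (Fin d) ℝ) *
    Matrix.diagonal ((↑) ∘ (Real.sqrt ·) ∘ (Matrix.posSemidef_conjTranspose_mul_self X).1.eigenvalues) *
    (star ((Matrix.posSemidef_conjTranspose_mul_self X).1.eigenvectorUnitary : Matrix (Fin d) (Fin d) ℝ))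

section Aux
variable {m : Type*} [Fintype m] [DecidableEq m]

lemma trace_fromBlocks' {p q : Type*} [Fintype p] [Fintype q]
    (A : Matrix p p ℝ) (B : Matrix p q ℝ) (C : Matrix q p ℝ) (D : Matrix q q ℝ) :
    trace (fromBlocks A B C D) = trace A + trace D := by
  simp [Matrix.trace, Fintype.sum_sum_type, fromBlocks, Matrix.diag]

lemma posSemidef_fromBlocks_diag {p q : Type*} [Fintype p] [Fintype q]
    {P : Matrix p p ℝ} {Q : Matrix q q ℝ} (hP : P.PosSemidef) (hQ : Q.PosSemidef) :
    (fromBlocks P 0 0 Q).PosSemidef := by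
  rw [Matrix.posSemidef_iff_dotProduct_mulVec]
  constructor
  · have h1 := hP.1
    have h2 := hQ.1
    rw [Matrix.IsHermitian, fromBlocks_conjTranspose]
    rw [show Pᴴ = P from h1, show Qᴴ = Q from h2]
    simp
  · intro x
    rw [fromBlocks_mulVec]
    have : dotProduct (star x)
        (Sum.elim (P *ᵥ (x ∘ Sum.inl) + (0 : Matrix p q ℝ) *ᵥ (x ∘ Sum.inr))
          ((0 : Matrix q p ℝ) *ᵥ (x ∘ Sum.inl) + Q *ᵥ (x ∘ Sum.inr)))
        = dotProduct (star (x ∘ Sum.inl)) (P *ᵥ (x ∘ Sum.inl))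
          + dotProduct (star (x ∘ Sum.inr)) (Q *ᵥ (x ∘ Sum.inr)) := by
      simp [dotProduct, Fintype.sum_sum_type]
    rw [this]
    exact add_nonneg ((posSemidef_iff_dotProduct_mulVec.mp hP).2 _)
        ((posSemidef_iff_dotProduct_mulVec.mp hQ).2 _)

lemma sum_sq_eq_trace {p q : Type*} [Fintype p] [Fintype q] (M : Matrix p q ℝ) :
    ∑ i, ∑ j, (M i j)^2 = trace (M * Mᵀ) := by
  simp only [Matrix.trace, Matrix.diag, mul_apply, transpose_apply, pow_two]

lemma trace_mul_le_half {p : Type*} [Fintype p] (M N : Matrix p p ℝ) :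
    trace (M * N) ≤ (trace (M * Mᵀ) + trace (N * Nᵀ)) / 2 := by
  have h1 : trace (M * N) = ∑ i, ∑ j, M i j * N j i := by
    simp only [Matrix.trace, Matrix.diag, mul_apply]
  have h2 : trace (M * Mᵀ) = ∑ i, ∑ j, (M i j)^2 := (sum_sq_eq_trace M).symm
  have h3 : trace (N * Nᵀ) = ∑ i, ∑ j, (N j i)^2 := by
    rw [← sum_sq_eq_trace N, Finset.sum_comm]
  rw [h1, h2, h3]
  have : ∀ i ∈ (Finset.univ : Finset p), ∑ j, M i j * N j i ≤
      ((∑ j, (M i j)^2) + ∑ j, (N j i)^2) / 2 := by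
    intro i _
    rw [← Finset.sum_add_distrib, Finset.sum_div]
    refine Finset.sum_le_sum fun j _ => ?_
    nlinarith [sq_nonneg (M i j - N j i)]
  calc ∑ i, ∑ j, M i j * N j i ≤ ∑ i, (((∑ j, (M i j)^2) + ∑ j, (N j i)^2) / 2) :=
        Finset.sum_le_sum this
    _ = ((∑ i, ∑ j, (M i j)^2) + ∑ i, ∑ j, (N j i)^2) / 2 := by
        rw [← Finset.sum_add_distrib, Finset.sum_div]



lemma trace_diag_conj (d e : m → ℝ) (W : Matrix m m ℝ) :
    trace (diagonal d * W * diagonal e * star W) = ∑ i, ∑ j, d i * e j * (W i j)^2 := by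
  rw [Matrix.star_eq_conjTranspose, conjTranspose_eq_transpose_of_trivial]
  simp only [Matrix.trace, Matrix.diag]
  refine Finset.sum_congr rfl fun i _ => ?_
  rw [mul_apply]
  refine Finset.sum_congr rfl fun j _ => ?_
  rw [mul_diagonal, diagonal_mul, transpose_apply]
  ring

lemma conj_sq (U : Matrix m m ℝ) (hUU' : star U * U = 1) (c : m → ℝ) :
    (U * diagonal c * star U) * (U * diagonal c * star U) = U * diagonal (fun i => c i * c i) * star U := by
  rw [show (diagonal fun i => c i * c i) = diagonal c * diagonal c from (diagonal_mul_diagonal c c).symm]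
  simp only [Matrix.mul_assoc]
  rw [← Matrix.mul_assoc (star U) U, hUU', Matrix.one_mul]

lemma trace_conj_pair (U V : Matrix m m ℝ) (hUU : U * star U = 1) (hUU' : star U * U = 1)
    (c e : m → ℝ) :
    trace ((U * diagonal c * star U) * (V * diagonal e * star V))
      = ∑ i, ∑ j, c i * e j * ((star U * V) i j)^2 := by
  have h : (U * diagonal c * star U) * (V * diagonal e * star V)
      = U * (diagonal c * (star U * V) * diagonal e * star (star U * V)) * star U := by
    simp only [Matrix.star_mul, star_star, Matrix.mul_assoc, hUU, Matrix.mul_one]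
  rw [h, Matrix.trace_mul_cycle, ← Matrix.mul_assoc, hUU', Matrix.one_mul, trace_diag_conj]

section
open scoped MatrixOrder
lemma psd_eq_of_sq_eq_sq {A B : Matrix m m ℝ} (hA : A.PosSemidef) (hB : B.PosSemidef)
    (h : A ^ 2 = B ^ 2) : A = B :=
  (CFC.sq_eq_sq_iff A B hA.nonneg hB.nonneg).mp h
end

lemma trace_mul_le_of_sq_eq {S T P Q : Matrix m m ℝ} (hS : S.IsHermitian) (hT : T.IsHermitian)
    (hP : P.PosSemidef) (hQ : Q.PosSemidef)
    (hPS : P * P = S * S) (hQT : Q * Q = T * T) :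
    trace (S * T) ≤ trace (P * Q) := by
  set U : Matrix m m ℝ := (hS.eigenvectorUnitary : Matrix m m ℝ) with hU
  set V : Matrix m m ℝ := (hT.eigenvectorUnitary : Matrix m m ℝ) with hV
  set a := hS.eigenvalues with ha
  set b := hT.eigenvalues with hb
  have hUU : U * star U = 1 := mem_unitaryGroup_iff.mp hS.eigenvectorUnitary.2
  have hUU' : star U * U = 1 := mem_unitaryGroup_iff'.mp hS.eigenvectorUnitary.2
  have hVV : V * star V = 1 := mem_unitaryGroup_iff.mp hT.eigenvectorUnitary.2
  have hVV' : star V * V = 1 := mem_unitaryGroup_iff'.mp hT.eigenvectorUnitary.2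
  have hSspec : S = U * diagonal a * star U := by
    have := hS.spectral_theorem
    simpa [RCLike.ofReal_real_eq_id] using this
  have hTspec : T = V * diagonal b * star V := by
    have := hT.spectral_theorem
    simpa [RCLike.ofReal_real_eq_id] using this
  have habs : ∀ (c : m → ℝ), (fun i => |c i| * |c i|) = (fun i => c i * c i) := by
    intro c; funext i; simp [abs_mul_abs_self]
  have hPeq : P = U * diagonal (fun i => |a i|) * star U := by
    apply psd_eq_of_sq_eq_sq hP
    · have := (Matrix.PosSemidef.diagonal (fun i => abs_nonneg (a i)) :
        (diagonal (fun i => |a i|)).PosSemidef).mul_mul_conjTranspose_same U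
      rwa [Matrix.star_eq_conjTranspose] 
    · rw [pow_two, pow_two, hPS, conj_sq U hUU' (fun i => |a i|), habs a,
        ← conj_sq U hUU' a, ← hSspec]
  have hQeq : Q = V * diagonal (fun i => |b i|) * star V := by
    apply psd_eq_of_sq_eq_sq hQ
    · have := (Matrix.PosSemidef.diagonal (fun i => abs_nonneg (b i)) :
        (diagonal (fun i => |b i|)).PosSemidef).mul_mul_conjTranspose_same V
      rwa [Matrix.star_eq_conjTranspose] 
    · rw [pow_two, pow_two, hQT, conj_sq V hVV' (fun i => |b i|), habs b,
        ← conj_sq V hVV' b, ← hTspec]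
  rw [hPeq, hQeq, trace_conj_pair U V hUU hUU']
  conv_lhs => rw [hSspec, hTspec]
  rw [trace_conj_pair U V hUU hUU']
  refine Finset.sum_le_sum fun i _ => Finset.sum_le_sum fun j _ => ?_
  have h1 : a i * b j ≤ |a i| * |b j| := (le_abs_self _).trans (le_of_eq (abs_mul _ _))
  exact mul_le_mul_of_nonneg_right h1 (sq_nonneg _)

end Aux

lemma gramSqrt_posSemidef {n d : ℕ} (X : Matrix (Fin n) (Fin d) ℝ) : (gramSqrt X).PosSemidef := by
  have hH := (Matrix.posSemidef_conjTranspose_mul_self X)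
  have := (Matrix.PosSemidef.diagonal (d := fun i => Real.sqrt (hH.1.eigenvalues i))
    (fun i => Real.sqrt_nonneg _)).mul_mul_conjTranspose_same
    (hH.1.eigenvectorUnitary : Matrix (Fin d) (Fin d) ℝ)
  rwa [← Matrix.star_eq_conjTranspose] at this

lemma gramSqrt_mul_self {n d : ℕ} (X : Matrix (Fin n) (Fin d) ℝ) :
    gramSqrt X * gramSqrt X = Xᴴ * X := by
  have hH := (Matrix.posSemidef_conjTranspose_mul_self X)
  have hUU' := mem_unitaryGroup_iff'.mp hH.1.eigenvectorUnitary.2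
  rw [gramSqrt, conj_sq _ hUU']
  have hspec : Xᴴ * X = (hH.1.eigenvectorUnitary : Matrix (Fin d) (Fin d) ℝ) *
      diagonal hH.1.eigenvalues * star (hH.1.eigenvectorUnitary : Matrix (Fin d) (Fin d) ℝ) := by
    have := hH.1.spectral_theorem
    simpa [RCLike.ofReal_real_eq_id] using this
  refine Eq.trans ?_ hspec.symm
  congr 3
  funext i
  exact Real.mul_self_sqrt (hH.eigenvalues_nonneg i)



lemma ct_eq_t {p q : Type*} [Fintype p] [Fintype q] (M : Matrix p q ℝ) : Mᴴ = Mᵀ :=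
  conjTranspose_eq_transpose_of_trivial M

lemma block_key {n d : ℕ} (X Y : Matrix (Fin n) (Fin d) ℝ) :
    ∑ i, ∑ j, ((gramSqrt X - gramSqrt Y) i j)^2 ≤ 2 * ∑ i, ∑ j, ((X - Y) i j)^2 := by
  set A := gramSqrt X with hAdef
  set B := gramSqrt Y with hBdef
  set A' := gramSqrt Xᵀ with hA'def
  set B' := gramSqrt Yᵀ with hB'def
  have hA : A.PosSemidef := gramSqrt_posSemidef X
  have hB : B.PosSemidef := gramSqrt_posSemidef Y
  have hA' : A'.PosSemidef := gramSqrt_posSemidef Xᵀ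
  have hB' : B'.PosSemidef := gramSqrt_posSemidef Yᵀ
  have hAA : A * A = Xᵀ * X := by
    rw [hAdef, gramSqrt_mul_self, ct_eq_t]
  have hBB : B * B = Yᵀ * Y := by
    rw [hBdef, gramSqrt_mul_self, ct_eq_t]
  have hAA' : A' * A' = X * Xᵀ := by
    rw [hA'def, gramSqrt_mul_self, ct_eq_t, transpose_transpose]
  have hBB' : B' * B' = Y * Yᵀ := by
    rw [hB'def, gramSqrt_mul_self, ct_eq_t, transpose_transpose]
  have hAt : Aᵀ = A := by rw [← ct_eq_t]; exact hA.1
  have hBt : Bᵀ = B := by rw [← ct_eq_t]; exact hB.1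
  have hA't : A'ᵀ = A' := by rw [← ct_eq_t]; exact hA'.1
  have hB't : B'ᵀ = B' := by rw [← ct_eq_t]; exact hB'.1
  -- dilations
  set S : Matrix (Fin d ⊕ Fin n) (Fin d ⊕ Fin n) ℝ := fromBlocks 0 Xᵀ X 0 with hSdef
  set T : Matrix (Fin d ⊕ Fin n) (Fin d ⊕ Fin n) ℝ := fromBlocks 0 Yᵀ Y 0 with hTdef
  set P : Matrix (Fin d ⊕ Fin n) (Fin d ⊕ Fin n) ℝ := fromBlocks A 0 0 A' with hPdef
  set Q : Matrix (Fin d ⊕ Fin n) (Fin d ⊕ Fin n) ℝ := fromBlocks B 0 0 B' with hQdef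
  have hS : S.IsHermitian := by
    rw [Matrix.IsHermitian, hSdef, fromBlocks_conjTranspose]
    simp [ct_eq_t]
  have hT : T.IsHermitian := by
    rw [Matrix.IsHermitian, hTdef, fromBlocks_conjTranspose]
    simp [ct_eq_t]
  have hP : P.PosSemidef := posSemidef_fromBlocks_diag hA hA'
  have hQ : Q.PosSemidef := posSemidef_fromBlocks_diag hB hB'
  have hPS : P * P = S * S := by
    rw [hPdef, hSdef, fromBlocks_multiply, fromBlocks_multiply, hAA, hAA']
    simp
  have hQT : Q * Q = T * T := by
    rw [hQdef, hTdef, fromBlocks_multiply, fromBlocks_multiply, hBB, hBB']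
    simp
  have hmain := trace_mul_le_of_sq_eq hS hT hP hQ hPS hQT
  have htXY : trace (Xᵀ * Y) = trace (X * Yᵀ) := by
    rw [trace_mul_comm, ← Matrix.trace_transpose (Y * Xᵀ), transpose_mul, transpose_transpose]
  have eST : trace (S * T) = 2 * trace (X * Yᵀ) := by
    rw [hSdef, hTdef, fromBlocks_multiply]
    simp only [Matrix.zero_mul, Matrix.mul_zero, add_zero, zero_add]
    rw [trace_fromBlocks', htXY]
    ring
  have ePQ : trace (P * Q) = trace (A * B) + trace (A' * B') := by
    rw [hPdef, hQdef, fromBlocks_multiply]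
    simp only [Matrix.zero_mul, Matrix.mul_zero, add_zero, zero_add]
    rw [trace_fromBlocks']
  have eA'B' : trace (A' * B') ≤ (trace (X * Xᵀ) + trace (Y * Yᵀ)) / 2 := by
    have := trace_mul_le_half A' B'
    rwa [hA't, hB't, hAA', hBB'] at this
  -- the two sides as traces
  rw [sum_sq_eq_trace, sum_sq_eq_trace]
  have hABt : (A - B)ᵀ = A - B := by rw [transpose_sub, hAt, hBt]
  have eLHS : trace ((A - B) * (A - B)ᵀ)
      = trace (Xᵀ * X) + trace (Yᵀ * Y) - 2 * trace (A * B) := by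
    rw [hABt]
    have hexp : (A - B) * (A - B) = A * A - A * B - (B * A - B * B) := by noncomm_ring
    rw [hexp, trace_sub, trace_sub, trace_sub, trace_mul_comm B A, hAA, hBB]
    ring
  have eRHS : trace ((X - Y) * (X - Y)ᵀ)
      = trace (X * Xᵀ) + trace (Y * Yᵀ) - 2 * trace (X * Yᵀ) := by
    rw [transpose_sub, Matrix.sub_mul, Matrix.mul_sub, Matrix.mul_sub,
      trace_sub, trace_sub, trace_sub]
    have : trace (Y * Xᵀ) = trace (X * Yᵀ) := by
      rw [← Matrix.trace_transpose (Y * Xᵀ), transpose_mul, transpose_transpose]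
    rw [this]
    ring
  have hXtX : trace (Xᵀ * X) = trace (X * Xᵀ) := trace_mul_comm _ _
  have hYtY : trace (Yᵀ * Y) = trace (Y * Yᵀ) := trace_mul_comm _ _
  rw [eLHS, eRHS]
  rw [eST, ePQ] at hmain
  linarith

lemma gramSqrt_neg {n d : ℕ} (Y : Matrix (Fin n) (Fin d) ℝ) : gramSqrt (-Y) = gramSqrt Y := by
  refine psd_eq_of_sq_eq_sq
    (gramSqrt_posSemidef (-Y))
    (gramSqrt_posSemidef Y) ?_
  rw [pow_two, pow_two, gramSqrt_mul_self, gramSqrt_mul_self]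
  simp


/-- The tuple `√(XᵀX) = (√(X₁ᵀX₁), …, √(X_LᵀX_L))`. -/
noncomputable def sqrtGram (X : V N R) : ∀ ℓ : Fin L, Matrix (Fin (R ℓ)) (Fin (R ℓ)) ℝ :=
  fun ℓ => gramSqrt (X ℓ)

/-- The second moment: tuple of Gram matrices `XᵀX = (X₁ᵀX₁, …, X_LᵀX_L)`. -/
def gram (X : V N R) : ∀ ℓ : Fin L, Matrix (Fin (R ℓ)) (Fin (R ℓ)) ℝ :=
  fun ℓ => (X ℓ)ᵀ * X ℓ

/-- A set `S ⊆ V` is transverse to the orbits of `H` if whenever `X ∈ S` and `Q·X ∈ S`,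
one has `Q·X = X` or `Q·X = −X`. -/
def Transverse (S : Set (V N R)) : Prop :=
  ∀ X ∈ S, ∀ Q : HGroup N, act Q X ∈ S → act Q X = X ∨ act Q X = -X

/-- For all `X, Y ∈ V`, `‖√(XᵀX) − √(YᵀY)‖ ≤ √2 · d_σ(X,Y)`. -/
theorem sqrtGram_norm_le_sqrt_two_mul_dSigma
    (L : ℕ) (hL : 0 < L) (N R : Fin L → ℕ) (hN : ∀ ℓ, 0 < N ℓ) (hR : ∀ ℓ, 0 < R ℓ)
    (X Y : V N R) :
    fnorm (sqrtGram X - sqrtGram Y) ≤ Real.sqrt 2 * dSigma X Y := by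
  have main : ∀ Z : V N R, (∀ ℓ, gramSqrt (Z ℓ) = gramSqrt (Y ℓ)) →
      fnorm (sqrtGram X - sqrtGram Y) ≤ Real.sqrt 2 * fnorm (X - Z) := by
    intro Z hZ
    unfold fnorm
    rw [← Real.sqrt_mul (by norm_num : (0:ℝ) ≤ 2)]
    apply Real.sqrt_le_sqrt
    rw [Finset.mul_sum]
    refine Finset.sum_le_sum fun ℓ _ => ?_
    have h := block_key (X ℓ) (Z ℓ)
    rw [hZ ℓ] at h
    simpa only [sqrtGram, Pi.sub_apply] using h
  rcases le_total (fnorm (X - Y)) (fnorm (X + Y)) with hc | hc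
  · rw [dSigma, min_eq_left hc]
    exact main Y (fun ℓ => rfl)
  · rw [dSigma, min_eq_right hc]
    have := main (-Y) (fun ℓ => by
      show gramSqrt ((-Y) ℓ) = _
      rw [show (-Y) ℓ = -(Y ℓ) from rfl, gramSqrt_neg])
    rwa [sub_neg_eq_add] at this


end GPR
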